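/- For a finite simple graph G, the number of ordered even-even partitions of V(G) (i.e., subsets V₁ ⊆ V(G) such that both G[V₁] and G[V(G)\V₁] have all degrees even) equals the number of odd-parity covers of the odd-extension G̅ of G. -/

import Mathlib

/-- The odd-extension of a graph `G`: to each vertex of even degree we attach a new
pendant vertex adjacent only to it. -/
def oddExtension {V : Type*} [Fintype V] [DecidableEq V]
    (G : SimpleGraph V) [DecidableRel G.Adj] :
    SimpleGraph (V ⊕ {v : V // Even (G.degree v)}) where
  Adj x y :=
    match x, y with
    | Sum.inl u, Sum.inl w => G.Adj u w
    | Sum.inl u, Sum.inr v => u = v.1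
    | Sum.inr v, Sum.inl u => v.1 = u
    | Sum.inr _, Sum.inr _ => False
  symm := by
    constructor
    rintro (u | v) (w | v') h
    · exact G.adj_symm h
    · exact h.symm
    · exact h.symm
    · exact h
  loopless := by
    constructor
    rintro (u | v) h
    · exact G.loopless.irrefl u h
    · exact h

open scoped Classical

section Aux
variable {V : Type*} [Fintype V] [DecidableEq V] (G : SimpleGraph V) [DecidableRel G.Adj]

lemma nbr_inr (w : {v : V // Even (G.degree v)}) :
    (oddExtension G).neighborSet (Sum.inr w) = {Sum.inl w.1} := by
  ext (u | u)
  · simp [oddExtension, SimpleGraph.neighborSet, eq_comm]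
  · simp [oddExtension, SimpleGraph.neighborSet]

lemma nbr_inl (v : V) :
    (oddExtension G).neighborSet (Sum.inl v) =
      Sum.inl '' G.neighborSet v ∪ {x | ∃ h : Even (G.degree v), x = Sum.inr ⟨v, h⟩} := by
  ext (u | u)
  · simp [oddExtension, SimpleGraph.neighborSet]
  · simp only [oddExtension, SimpleGraph.neighborSet, Set.mem_setOf_eq, Set.mem_union,
      Set.mem_image]
    constructor
    · intro h
      exact Or.inr ⟨h ▸ u.2, congrArg Sum.inr (Subtype.ext h.symm)⟩
    · rintro (⟨a, _, ha⟩ | ⟨hh, he⟩)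
      · exact absurd ha (by simp)
      · rw [Sum.inr.inj he]

lemma ncard_singleton_inter {α : Type*} (a : α) (Q : Set α) :
    ({a} ∩ Q).ncard = if a ∈ Q then 1 else 0 := by
  split_ifs with h
  · rw [Set.inter_eq_self_of_subset_left (Set.singleton_subset_iff.2 h), Set.ncard_singleton]
  · rw [Set.singleton_inter_eq_empty.2 h, Set.ncard_empty]

lemma parity_inr (Q : Set (V ⊕ {v : V // Even (G.degree v)}))
    (w : {v : V // Even (G.degree v)}) :
    (((oddExtension G).neighborSet (Sum.inr w) ∪ {Sum.inr w}) ∩ Q).ncard =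
      (if Sum.inl w.1 ∈ Q then 1 else 0) + (if Sum.inr w ∈ Q then 1 else 0) := by
  have hdisj : Disjoint ({Sum.inl w.1} ∩ Q)
      ({(Sum.inr w : V ⊕ {v : V // Even (G.degree v)})} ∩ Q) :=
    Disjoint.mono Set.inter_subset_left Set.inter_subset_left (by simp)
  rw [nbr_inr, Set.union_inter_distrib_right, Set.ncard_union_eq hdisj,
    ncard_singleton_inter, ncard_singleton_inter]

lemma parity_inl (Q : Set (V ⊕ {v : V // Even (G.degree v)})) (v : V) :
    (((oddExtension G).neighborSet (Sum.inl v) ∪ {Sum.inl v}) ∩ Q).ncard =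
      (G.neighborSet v ∩ Sum.inl ⁻¹' Q).ncard + (if Sum.inl v ∈ Q then 1 else 0) +
        (if ∃ h : Even (G.degree v), Sum.inr ⟨v, h⟩ ∈ Q then 1 else 0) := by
  have hset : ((oddExtension G).neighborSet (Sum.inl v) ∪ {Sum.inl v}) ∩ Q =
      (Sum.inl '' ((G.neighborSet v ∪ {v}) ∩ Sum.inl ⁻¹' Q)) ∪
        ({x | ∃ h : Even (G.degree v), x = Sum.inr ⟨v, h⟩} ∩ Q) := by
    rw [nbr_inl, Set.union_right_comm, ← Set.image_singleton (f := Sum.inl),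
      ← Set.image_union, Set.union_inter_distrib_right, Set.image_inter_preimage]
  have hdisj : Disjoint (Sum.inl '' ((G.neighborSet v ∪ {v}) ∩ Sum.inl ⁻¹' Q))
      ({x | ∃ h : Even (G.degree v), x = Sum.inr ⟨v, h⟩} ∩ Q) := by
    rw [Set.disjoint_left]
    rintro x ⟨a, -, rfl⟩ ⟨⟨h, h'⟩, -⟩
    simp at h'
  rw [hset, Set.ncard_union_eq hdisj, Set.ncard_image_of_injective _ Sum.inl_injective]
  congr 1
  · have hdisj2 : Disjoint (G.neighborSet v ∩ Sum.inl ⁻¹' Q) ({v} ∩ Sum.inl ⁻¹' Q) :=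
      Disjoint.mono Set.inter_subset_left Set.inter_subset_left (by simp)
    rw [Set.union_inter_distrib_right, Set.ncard_union_eq hdisj2, ncard_singleton_inter]
    congr 1
  · by_cases h : Even (G.degree v)
    · have h1 : {x : V ⊕ {v : V // Even (G.degree v)} | ∃ h : Even (G.degree v),
          x = Sum.inr ⟨v, h⟩} = {Sum.inr ⟨v, h⟩} := by
        ext x; simp [h]
      rw [h1, ncard_singleton_inter]
      congr 1
      simp [h]
    · have h1 : {x : V ⊕ {v : V // Even (G.degree v)} | ∃ h : Even (G.degree v),
          x = Sum.inr ⟨v, h⟩} = ∅ := by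
        ext x; simp [h]
      rw [h1, Set.empty_inter, Set.ncard_empty]
      simp [h]

lemma deg_eq (v : V) (W : Set V) :
    (G.neighborSet v ∩ W).ncard + (G.neighborSet v \ W).ncard = G.degree v := by
  rw [Set.ncard_inter_add_ncard_diff_eq_ncard]
  rw [Set.ncard_eq_toFinset_card']
  simp [SimpleGraph.degree, SimpleGraph.neighborFinset]

lemma P_iff (Q : Set (V ⊕ {v : V // Even (G.degree v)})) :
    (∀ x, Odd ((((oddExtension G).neighborSet x ∪ {x}) ∩ Q).ncard)) ↔
      ((∀ w : {v : V // Even (G.degree v)}, (Sum.inr w ∈ Q ↔ Sum.inl w.1 ∉ Q)) ∧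
        (∀ v ∈ Sum.inl ⁻¹' Q, Even ((Sum.inl ⁻¹' Q ∩ G.neighborSet v).ncard)) ∧
        (∀ v ∈ (Sum.inl ⁻¹' Q)ᶜ, Even (((Sum.inl ⁻¹' Q)ᶜ ∩ G.neighborSet v).ncard))) := by
  set W : Set V := Sum.inl ⁻¹' Q with hW
  have hcap : ∀ v : V, (W ∩ G.neighborSet v).ncard = (G.neighborSet v ∩ W).ncard := fun v => by
    rw [Set.inter_comm]
  have hcapc : ∀ v : V, (Wᶜ ∩ G.neighborSet v).ncard = (G.neighborSet v \ W).ncard := fun v => by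
    rw [Set.inter_comm, Set.diff_eq]
  constructor
  · intro h
    have hpend : ∀ w : {v : V // Even (G.degree v)}, (Sum.inr w ∈ Q ↔ Sum.inl w.1 ∉ Q) := by
      intro w
      have h0 := h (Sum.inr w)
      rw [parity_inr, Nat.odd_iff] at h0
      by_cases h1 : Sum.inl w.1 ∈ Q <;> by_cases h2 : Sum.inr w ∈ Q <;>
        simp [h1, h2] at h0 ⊢
    refine ⟨hpend, ?_, ?_⟩
    · intro v hv
      have h0 := h (Sum.inl v)
      rw [parity_inl, ← hW] at h0
      have hv' : Sum.inl v ∈ Q := hv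
      have hnot : ¬∃ h : Even (G.degree v),
          Sum.inr (⟨v, h⟩ : {v : V // Even (G.degree v)}) ∈ Q :=
        fun ⟨he, hin⟩ => (hpend ⟨v, he⟩).1 hin hv'
      rw [if_pos hv', if_neg hnot, Nat.odd_iff] at h0
      rw [hcap, Nat.even_iff]
      omega
    · intro v hv
      have h0 := h (Sum.inl v)
      rw [parity_inl, ← hW] at h0
      have hv' : Sum.inl v ∉ Q := hv
      rw [if_neg hv', Nat.odd_iff] at h0
      have hdeg := deg_eq G v W
      rw [hcapc, Nat.even_iff]
      by_cases he : Even (G.degree v)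
      · have hin : ∃ h : Even (G.degree v),
            Sum.inr (⟨v, h⟩ : {v : V // Even (G.degree v)}) ∈ Q :=
          ⟨he, (hpend ⟨v, he⟩).2 hv'⟩
        rw [if_pos hin] at h0
        rw [Nat.even_iff] at he
        omega
      · have hnot : ¬∃ h : Even (G.degree v),
            Sum.inr (⟨v, h⟩ : {v : V // Even (G.degree v)}) ∈ Q :=
          fun ⟨h', _⟩ => he h'
        rw [if_neg hnot] at h0
        rw [Nat.even_iff] at he
        omega
  · rintro ⟨hpend, h1, h2⟩ (v | w)
    · rw [parity_inl, ← hW, Nat.odd_iff]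
      have hdeg := deg_eq G v W
      by_cases hv : Sum.inl v ∈ Q
      · have hnot : ¬∃ h : Even (G.degree v),
            Sum.inr (⟨v, h⟩ : {v : V // Even (G.degree v)}) ∈ Q :=
          fun ⟨he, hin⟩ => (hpend ⟨v, he⟩).1 hin hv
        rw [if_pos hv, if_neg hnot]
        have h3 := h1 v hv
        rw [hcap, Nat.even_iff] at h3
        omega
      · rw [if_neg hv]
        have h3 := h2 v hv
        rw [hcapc, Nat.even_iff] at h3
        by_cases he : Even (G.degree v)
        · have hin : ∃ h : Even (G.degree v),
              Sum.inr (⟨v, h⟩ : {v : V // Even (G.degree v)}) ∈ Q :=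
            ⟨he, (hpend ⟨v, he⟩).2 hv⟩
          rw [if_pos hin]
          rw [Nat.even_iff] at he
          omega
        · have hnot : ¬∃ h : Even (G.degree v),
              Sum.inr (⟨v, h⟩ : {v : V // Even (G.degree v)}) ∈ Q :=
            fun ⟨h', _⟩ => he h'
          rw [if_neg hnot]
          rw [Nat.even_iff] at he
          omega
    · rw [parity_inr, Nat.odd_iff]
      have h0 := hpend w
      by_cases h1 : Sum.inl w.1 ∈ Q <;> by_cases h2 : Sum.inr w ∈ Q <;>
        simp_all

end Aux

/-- the number of even-even partitions of `G` (subsets `V₁` such that both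
`G[V₁]` and `G[V₁ᶜ]` have all degrees even) equals the number of odd-parity covers of
the odd-extension of `G`. -/
theorem stmt_5 {V : Type*} [Fintype V] [DecidableEq V]
    (G : SimpleGraph V) [DecidableRel G.Adj] :
    Nat.card {V₁ : Set V //
        (∀ v ∈ V₁, Even ((V₁ ∩ G.neighborSet v).ncard)) ∧
        (∀ v ∈ V₁ᶜ, Even ((V₁ᶜ ∩ G.neighborSet v).ncard))} =
      Nat.card {Q : Set (V ⊕ {v : V // Even (G.degree v)}) //
        ∀ x, Odd ((((oddExtension G).neighborSet x ∪ {x}) ∩ Q).ncard)} := by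
  apply Nat.card_congr
  refine
    { toFun := fun V₁ => ⟨{x | match x with
        | Sum.inl v => v ∈ V₁.1
        | Sum.inr v => v.1 ∉ V₁.1}, ?_⟩
      invFun := fun Q => ⟨Sum.inl ⁻¹' Q.1, ?_, ?_⟩
      left_inv := ?_
      right_inv := ?_ }
  · rw [P_iff]
    obtain ⟨W, h1, h2⟩ := V₁
    exact ⟨fun w => Iff.rfl, h1, h2⟩
  · exact ((P_iff G Q.1).1 Q.2).2.1
  · exact ((P_iff G Q.1).1 Q.2).2.2
  · rintro ⟨W, hW⟩
    exact Subtype.ext rfl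
  · rintro ⟨Q, hQ⟩
    have hpend := ((P_iff G Q).1 hQ).1
    refine Subtype.ext ?_
    ext (v | w)
    · rfl
    · exact ⟨fun h => (hpend w).2 h, fun h => (hpend w).1 h⟩
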